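/- Let ∃X[F] be an ∃CNF formula and suppose the D-sequents (∃X[F], q′, W′) → Z and (∃X[F], q″, W″) → Z hold, where Vars(q′) ∩ W″ = Vars(q″) ∩ W′ = ∅. Let q′ and q″ be resolvable on a variable v ∈ V(F) and let q be their resolvent. Then the D-sequent (∃X[F], q, W′ ∪ W″) → Z holds as well. -/

import Mathlib

open scoped Classical

namespace QE

variable {α : Type*}

/-- A literal: a variable together with a polarity. -/
abbrev Lit (α : Type*) := α × Bool

/-- A clause: a finite disjunction of literals. -/
abbrev Clause (α : Type*) := Finset (Lit α)

/-- A CNF formula: a finite conjunction of clauses. -/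
abbrev CNF (α : Type*) := Finset (Clause α)

/-- A (partial) assignment of Boolean values to variables. -/
abbrev Assign (α : Type*) := α → Option Bool

/-- The variables of a clause. -/
def clauseVars (C : Clause α) : Set α := {v | ∃ b, (v, b) ∈ C}

/-- The variables of a CNF formula. -/
def cnfVars (F : CNF α) : Set α := ⋃ C ∈ F, clauseVars C

/-- The variables assigned by a partial assignment. -/
def avars (q : Assign α) : Set α := {v | q v ≠ none}

/-- The (partial) assignment `r` extends the (partial) assignment `q`, i.e. `q ⊆ r`. -/
def AExtends (q r : Assign α) : Prop := ∀ v b, q v = some b → r v = some b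

/-- The complete assignment (point) `p` extends the partial assignment `q`, i.e. `q ⊆ p`. -/
def PExtends (q : Assign α) (p : α → Bool) : Prop := ∀ v b, q v = some b → p v = b

/-- A complete assignment satisfies a clause. -/
def pointSatClause (p : α → Bool) (C : Clause α) : Prop := ∃ l ∈ C, p l.1 = l.2

/-- A complete assignment satisfies a CNF formula. -/
def pointSatCNF (p : α → Bool) (F : CNF α) : Prop := ∀ C ∈ F, pointSatClause p C

/-- A partial assignment satisfies a clause. -/
def asatClause (q : Assign α) (C : Clause α) : Prop := ∃ l ∈ C, q l.1 = some l.2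

/-- A partial assignment falsifies a literal. -/
def afalsLit (q : Assign α) (l : Lit α) : Prop := q l.1 = some (!l.2)

/-- The cofactor of a clause: remove the literals falsified by `q`. -/
noncomputable def cofClause (q : Assign α) (C : Clause α) : Clause α :=
  C.filter (fun l => ¬ afalsLit q l)

/-- The cofactor `F|q`: remove clauses satisfied by `q` and delete from the
remaining clauses all literals falsified by `q`. -/
noncomputable def cofactor (q : Assign α) (F : CNF α) : CNF α :=
  (F.filter (fun C => ¬ asatClause q C)).image (cofClause q)

/-- The CNF formula `F` implies the clause `C`. -/
def Implies (F : CNF α) (C : Clause α) : Prop :=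
  ∀ p : α → Bool, pointSatCNF p F → pointSatClause p C

/-- `C` is a `Z`-clause: `V(C) ∩ Z ≠ ∅`. -/
def IsZClause (Z : Set α) (C : Clause α) : Prop := (clauseVars C ∩ Z).Nonempty

/-- `F^Z`: the set of `Z`-clauses of `F`. -/
noncomputable def zClauses (F : CNF α) (Z : Set α) : CNF α :=
  F.filter (fun C => IsZClause Z C)

/-- `p` is a `Z`-boundary point of `F`: `Z ≠ ∅`, `p` falsifies `F`, every clause of `F`
falsified by `p` is a `Z`-clause, and the latter condition fails for every proper subset of `Z`. -/
def BoundaryPt (F : CNF α) (Z : Set α) (p : α → Bool) : Prop :=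
  Z.Nonempty ∧ ¬ pointSatCNF p F ∧
  (∀ C ∈ F, ¬ pointSatClause p C → IsZClause Z C) ∧
  (∀ Z' ⊂ Z, ¬ (∀ C ∈ F, ¬ pointSatClause p C → IsZClause Z' C))

/-- A point `p` is `W`-removable in `F`: there is a clause `C` such that `F` implies `C`,
`p` falsifies `C`, and `V(C) ∩ W = ∅`. -/
def Removable (F : CNF α) (W : Set α) (p : α → Bool) : Prop :=
  ∃ C : Clause α, Implies F C ∧ ¬ pointSatClause p C ∧ clauseVars C ∩ W = ∅

/-- The variables of `Z` are redundant in `∃X[F]` with scope `W`: for every nonempty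
subset `Vs ⊆ Z` there is no `W`-removable `Vs`-boundary point of `F`. -/
def RedundantWithScope (F : CNF α) (Z W : Set α) : Prop :=
  ∀ Vs : Set α, Vs ⊆ Z → Vs.Nonempty →
    ∀ p : α → Bool, BoundaryPt F Vs p → ¬ Removable F W p

/-- The D-sequent `(∃X[F], q, W) → Z`: the variables of `Z` are redundant
in `∃X[F|q]` with scope `W`. -/
def DSeq (F : CNF α) (X : Set α) (q : Assign α) (W Z : Set α) : Prop :=
  RedundantWithScope (cofactor q F) Z W

/-- `∃X[F] ≡ ∃X[H]`. -/
def ExEquiv (X : Set α) (F H : CNF α) : Prop :=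
  ∀ p : α → Bool,
    (∃ p' : α → Bool, (∀ v ∉ X, p' v = p v) ∧ pointSatCNF p' F) ↔
    (∃ p' : α → Bool, (∀ v ∉ X, p' v = p v) ∧ pointSatCNF p' H)

/-- The variables of `Z` are redundant in `∃X[F]`: `∃X[F] ≡ ∃X[F \ F^Z]`. -/
noncomputable def Redundant (F : CNF α) (X Z : Set α) : Prop :=
  ExEquiv X F (F \ zClauses F Z)

/-- Clauses `C` and `C'` contain opposite literals of the variable `w`. -/
def oppLitOn (C C' : Clause α) (w : α) : Prop := ∃ b, (w, b) ∈ C ∧ (w, !b) ∈ C'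

/-- Clauses `C` and `C'` are resolvable on `v`: they contain opposite literals of
exactly one variable, namely `v`. -/
def ResolvableOn (C C' : Clause α) (v : α) : Prop := ∀ w, oppLitOn C C' w ↔ w = v

/-- A variable `v` is blocked in `F`: no two clauses of `F` are resolvable on `v`. -/
def BlockedVar (F : CNF α) (v : α) : Prop :=
  ∀ C ∈ F, ∀ C' ∈ F, ¬ ResolvableOn C C' v

/-- Assignments `q` and `q'` assign opposite values to the variable `w`. -/
def aOppOn (q q' : Assign α) (w : α) : Prop := ∃ b, q w = some b ∧ q' w = some (!b)

/-- Assignments `q` and `q'` are resolvable on `v`: exactly one variable assigned by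
both of them, namely `v`, is assigned opposite values. -/
def AResolvableOn (q q' : Assign α) (v : α) : Prop := ∀ w, aOppOn q q' w ↔ w = v

/-- The resolvent of assignments `q` and `q'` on `v`: all single-variable assignments
of `q` and `q'` except those to `v`. -/
noncomputable def aResolvent (q q' : Assign α) (v : α) : Assign α :=
  fun w => if w = v then none else ((q w).orElse (fun _ => q' w))




section Helpers

variable {α : Type*}

lemma mem_cofactor {r : Assign α} {F : CNF α} {E : Clause α} :
    E ∈ cofactor r F ↔ ∃ D ∈ F, ¬ asatClause r D ∧ cofClause r D = E := by
  simp only [cofactor, Finset.mem_image, Finset.mem_filter]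
  constructor
  · rintro ⟨D, ⟨hD, hns⟩, rfl⟩; exact ⟨D, hD, hns, rfl⟩
  · rintro ⟨D, hD, hns, rfl⟩; exact ⟨D, ⟨hD, hns⟩, rfl⟩

lemma cof_subset {r : Assign α} {D : Clause α} : cofClause r D ⊆ D :=
  Finset.filter_subset _ _

lemma not_sat_iff {p : α → Bool} {C : Clause α} :
    ¬ pointSatClause p C ↔ ∀ l ∈ C, p l.1 ≠ l.2 := by
  constructor
  · intro h l hl he; exact h ⟨l, hl, he⟩
  · rintro h ⟨l, hl, he⟩; exact h l hl he

/-- All literals in a clause of a cofactor are on variables unassigned by `r`. -/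
lemma cof_novars {r : Assign α} {F : CNF α} {E : Clause α} (hE : E ∈ cofactor r F)
    {l : Lit α} (hl : l ∈ E) : r l.1 = none := by
  obtain ⟨D, _hD, hns, rfl⟩ := mem_cofactor.mp hE
  rw [cofClause, Finset.mem_filter] at hl
  obtain ⟨hlD, hnf⟩ := hl
  cases h : r l.1 with
  | none => rfl
  | some c =>
    by_cases hc : c = l.2
    · exact absurd ⟨l, hlD, by rw [h, hc]⟩ hns
    · exact absurd (show afalsLit r l by
        rw [afalsLit, h]
        cases c <;> cases hl2 : l.2 <;> simp_all) hnf

lemma sat_agree {p p' : α → Bool} {E : Clause α}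
    (h : ∀ l ∈ E, p l.1 = p' l.1) :
    pointSatClause p E ↔ pointSatClause p' E := by
  constructor
  · rintro ⟨l, hl, hs⟩; exact ⟨l, hl, (h l hl) ▸ hs⟩
  · rintro ⟨l, hl, hs⟩; exact ⟨l, hl, (h l hl).symm ▸ hs⟩

/-- For a point extending `r`, satisfying the cofactored clause is the same as
satisfying the clause. -/
lemma ext_clause {r : Assign α} {s : α → Bool} (hext : PExtends r s) {D : Clause α} :
    pointSatClause s (cofClause r D) ↔ pointSatClause s D := by
  constructor
  · rintro ⟨l, hl, hs⟩; exact ⟨l, cof_subset hl, hs⟩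
  · rintro ⟨l, hl, hs⟩
    refine ⟨l, Finset.mem_filter.mpr ⟨hl, fun hf => ?_⟩, hs⟩
    have := hext l.1 (!l.2) hf
    rw [hs] at this
    simp at this

lemma sat_of_asat {r : Assign α} {s : α → Bool} (hext : PExtends r s) {D : Clause α}
    (h : asatClause r D) : pointSatClause s D := by
  obtain ⟨l, hl, hs⟩ := h
  exact ⟨l, hl, hext l.1 l.2 hs⟩

/-- For a point extending `r`, satisfying `F|r` is the same as satisfying `F`. -/
lemma ext_cnf {r : Assign α} {s : α → Bool} (hext : PExtends r s) {F : CNF α} :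
    pointSatCNF s (cofactor r F) ↔ pointSatCNF s F := by
  constructor
  · intro h D hD
    by_cases hns : asatClause r D
    · exact sat_of_asat hext hns
    · exact (ext_clause hext).mp (h _ (mem_cofactor.mpr ⟨D, hD, hns, rfl⟩))
  · intro h E hE
    obtain ⟨D, hD, _hns, rfl⟩ := mem_cofactor.mp hE
    exact (ext_clause hext).mpr (h D hD)

lemma mem_cnfVars {F : CNF α} {w : α} :
    w ∈ cnfVars F ↔ ∃ C ∈ F, ∃ b, (w, b) ∈ C := by
  simp [cnfVars, clauseVars]

/-- The key transfer lemma: if `p₁` is a `Vs`-boundary point of `F|q` that is removable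
with a clause avoiding the variables of `q`, and `qa ⊆ q ∪ {v := b}` with `p₁ v = b`,
then `p₁` is a `Wa`-removable `Vs`-boundary point of `F|qa`. -/
lemma main_transfer (F : CNF α) (q qa : Assign α) (v : α) (b : Bool)
    (Vs Wa : Set α) (p₁ : α → Bool)
    (hqv : q v = none) (hqav : qa v = some b)
    (hsub : ∀ w c, qa w = some c → w = v ∨ q w = some c)
    (hVq : ∀ w ∈ Vs, q w = none) (hvVs : v ∉ Vs)
    (hQF : avars q ⊆ cnfVars F)
    (hdiff : ∀ w, q w ≠ none → qa w = none → w ∉ Wa)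
    (hextv : p₁ v = b)
    (hext : PExtends q p₁)
    (hbp : BoundaryPt (cofactor q F) Vs p₁)
    (C₀ : Clause α)
    (hC₀i : Implies (cofactor q F) C₀)
    (hC₀f : ¬ pointSatClause p₁ C₀)
    (hC₀W : clauseVars C₀ ∩ Wa = ∅)
    (hC₀q : ∀ l ∈ C₀, q l.1 = none) :
    BoundaryPt (cofactor qa F) Vs p₁ ∧ Removable (cofactor qa F) Wa p₁ := by
  have hexta : PExtends qa p₁ := by
    intro w c h
    rcases hsub w c h with rfl | h'
    · rw [hqav] at h; injection h with h; rw [hextv, h]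
    · exact hext w c h'
  obtain ⟨hne, hfals, hall, hmin⟩ := hbp
  constructor
  · refine ⟨hne, ?_, ?_, ?_⟩
    · -- p₁ falsifies F|qa
      rw [pointSatCNF] at hfals ⊢
      push_neg at hfals ⊢
      obtain ⟨E, hE, hEf⟩ := hfals
      obtain ⟨D, hDF, _hnsq, rfl⟩ := mem_cofactor.mp hE
      have hDfals : ¬ pointSatClause p₁ D := fun h => hEf ((ext_clause hext).mpr h)
      have hnsqa : ¬ asatClause qa D := fun h => hDfals (sat_of_asat hexta h)
      exact ⟨cofClause qa D, mem_cofactor.mpr ⟨D, hDF, hnsqa, rfl⟩,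
        fun h => hDfals ((ext_clause hexta).mp h)⟩
    · -- every clause of F|qa falsified by p₁ is a Vs-clause
      intro E' hE' hE'f
      obtain ⟨D, hDF, _hnsqa, rfl⟩ := mem_cofactor.mp hE'
      have hDfals : ¬ pointSatClause p₁ D := fun h => hE'f ((ext_clause hexta).mpr h)
      have hnsq : ¬ asatClause q D := fun h => hDfals (sat_of_asat hext h)
      have hCmem : cofClause q D ∈ cofactor q F := mem_cofactor.mpr ⟨D, hDF, hnsq, rfl⟩
      have hCf : ¬ pointSatClause p₁ (cofClause q D) :=
        fun h => hDfals ((ext_clause hext).mp h)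
      obtain ⟨w, hw1, hw2⟩ := hall _ hCmem hCf
      obtain ⟨bb, hmem⟩ := hw1
      have hmemD : (w, bb) ∈ D := cof_subset hmem
      have hnf : ¬ afalsLit q (w, bb) := (Finset.mem_filter.mp hmem).2
      refine ⟨w, ⟨bb, Finset.mem_filter.mpr ⟨hmemD, fun hf => ?_⟩⟩, hw2⟩
      rcases hsub w (!bb) hf with rfl | h'
      · exact hvVs hw2
      · exact hnf h'
    · -- minimality
      intro Z' hZ' hcontra
      have := hmin Z' hZ'
      push_neg at this
      obtain ⟨C, hCmem, hCf, hCnotZ'⟩ := this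
      obtain ⟨D, hDF, _hnsq, rfl⟩ := mem_cofactor.mp hCmem
      have hDfals : ¬ pointSatClause p₁ D := fun h => hCf ((ext_clause hext).mpr h)
      have hnsqa : ¬ asatClause qa D := fun h => hDfals (sat_of_asat hexta h)
      have hE'mem : cofClause qa D ∈ cofactor qa F := mem_cofactor.mpr ⟨D, hDF, hnsqa, rfl⟩
      have hE'f : ¬ pointSatClause p₁ (cofClause qa D) :=
        fun h => hDfals ((ext_clause hexta).mp h)
      obtain ⟨w, hw1, hw2⟩ := hcontra _ hE'mem hE'f
      obtain ⟨bb, hmem⟩ := hw1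
      have hmemD : (w, bb) ∈ D := cof_subset hmem
      have hwVs : w ∈ Vs := hZ'.subset hw2
      have hqw : q w = none := hVq w hwVs
      refine hCnotZ' ⟨w, ⟨bb, Finset.mem_filter.mpr ⟨hmemD, fun hf => ?_⟩⟩, hw2⟩
      rw [afalsLit] at hf
      rw [hqw] at hf
      exact nomatch hf
  · -- Removability
    classical
    set SF : Finset α := F.biUnion (fun C => C.image Prod.fst) with hSF
    have hmemSF : ∀ w, w ∈ cnfVars F → w ∈ SF := by
      intro w hw
      obtain ⟨C, hC, bb, hb⟩ := mem_cnfVars.mp hw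
      rw [hSF, Finset.mem_biUnion]
      exact ⟨C, hC, Finset.mem_image.mpr ⟨(w, bb), hb, rfl⟩⟩
    set neg : Clause α :=
      (SF.filter (fun w => q w ≠ none ∧ qa w = none)).image
        (fun w => (w, !((q w).getD true))) with hneg
    refine ⟨C₀ ∪ neg, ?_, ?_, ?_⟩
    · -- Implies (cofactor qa F) (C₀ ∪ neg)
      intro s hs
      set s' : α → Bool := fun w => (qa w).getD (s w) with hs'def
      have hs'ext : PExtends qa s' := by
        intro w c h; simp [hs'def, h]
      have hs'eq : ∀ w, qa w = none → s' w = s w := by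
        intro w h; simp [hs'def, h]
      have hs'cof : pointSatCNF s' (cofactor qa F) := by
        intro E hE
        exact (sat_agree (fun l hl => hs'eq l.1 (cof_novars hE hl))).mpr (hs _ hE)
      have hs'F : pointSatCNF s' F := (ext_cnf hs'ext).mp hs'cof
      set t : α → Bool := fun w => (q w).getD (s' w) with htdef
      have htext : PExtends q t := by
        intro w c h; simp [htdef, h]
      have hteq : ∀ w, q w = none → t w = s' w := by
        intro w h; simp [htdef, h]
      by_cases htF : pointSatCNF t F
      · have htcof : pointSatCNF t (cofactor q F) := (ext_cnf htext).mpr htF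
        obtain ⟨l, hlC, hlt⟩ := hC₀i t htcof
        have hql : q l.1 = none := hC₀q l hlC
        have ht1 : t l.1 = s' l.1 := hteq l.1 hql
        cases hqa : qa l.1 with
        | none =>
          have : s' l.1 = s l.1 := hs'eq l.1 hqa
          exact ⟨l, Finset.mem_union_left _ hlC, by rw [← this, ← ht1, hlt]⟩
        | some c =>
          rcases hsub l.1 c hqa with hlv | h'
          · -- l.1 = v, c = b; then l = (v, b), but p₁ falsifies C₀ and p₁ v = b
            exfalso
            have hcb : c = b := by
              rw [hlv, hqav] at hqa; exact (Option.some.inj hqa).symm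
            have hs'v : s' l.1 = c := by simp [hs'def, hqa]
            have hl2 : l.2 = b := by rw [← hlt, ht1, hs'v, hcb]
            exact (not_sat_iff.mp hC₀f) l hlC (by rw [hlv, hextv, hl2])
          · rw [hql] at h'; exact nomatch h'
      · rw [pointSatCNF] at htF
        push_neg at htF
        obtain ⟨D, hDF, hDf⟩ := htF
        obtain ⟨l, hlD, hsl⟩ := hs'F D hDF
        have htl : t l.1 ≠ l.2 := not_sat_iff.mp hDf l hlD
        cases hq : q l.1 with
        | none => exact absurd (by rw [hteq l.1 hq, hsl]) htl
        | some c =>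
          have htc : t l.1 = c := by simp [htdef, hq]
          have hcne : c ≠ l.2 := by rw [← htc]; exact htl
          have hcval : c = !l.2 := by cases c <;> cases hl2 : l.2 <;> simp_all
          have hqanone : qa l.1 = none := by
            cases hqa : qa l.1 with
            | none => rfl
            | some c' =>
              exfalso
              rcases hsub l.1 c' hqa with hlv | h'
              · rw [hlv, hqv] at hq; exact nomatch hq
              · rw [hq] at h'; injection h' with h''
                have : s' l.1 = c' := by simp [hs'def, hqa]
                rw [hsl] at this; rw [← h'', hcval] at this
                simp at this
          have hlSF : l.1 ∈ SF := hmemSF l.1 (hQF (by simp [avars, hq]))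
          have hlneg : l ∈ neg := by
            rw [hneg, Finset.mem_image]
            refine ⟨l.1, Finset.mem_filter.mpr ⟨hlSF, by simp [hq], hqanone⟩, ?_⟩
            rw [hq]
            simp [hcval]
          have : s l.1 = l.2 := by rw [← hs'eq l.1 hqanone, hsl]
          exact ⟨l, Finset.mem_union_right _ hlneg, this⟩
    · -- p₁ falsifies C₀ ∪ neg
      rw [not_sat_iff]
      intro l hl
      rcases Finset.mem_union.mp hl with h | h
      · exact not_sat_iff.mp hC₀f l h
      · rw [hneg, Finset.mem_image] at h
        obtain ⟨w, hw, rfl⟩ := h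
        obtain ⟨_, hq, _⟩ := Finset.mem_filter.mp hw
        cases hqw : q w with
        | none => exact absurd hqw hq
        | some c =>
          have : p₁ w = c := hext w c hqw
          simp [hqw, this]
    · -- variables disjoint from Wa
      rw [Set.eq_empty_iff_forall_notMem]
      rintro w ⟨⟨bb, hmem⟩, hwWa⟩
      rcases Finset.mem_union.mp hmem with h | h
      · exact Set.eq_empty_iff_forall_notMem.mp hC₀W w ⟨⟨bb, h⟩, hwWa⟩
      · rw [hneg, Finset.mem_image] at h
        obtain ⟨w', hw', heq⟩ := h
        obtain ⟨_, hq, hqa⟩ := Finset.mem_filter.mp hw'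
        have hww : w' = w := congrArg Prod.fst heq
        rw [hww] at hq hqa
        exact hdiff w hq hqa hwWa

end Helpers

/-- Proposition 9, join rule: If the D-sequents `(∃X[F], q', W') → Z` and
`(∃X[F], q'', W'') → Z` hold, `Vars(q') ∩ W'' = Vars(q'') ∩ W' = ∅`, and `q'`, `q''` are
resolvable on `v ∈ V(F)` with resolvent `q`, then the D-sequent
`(∃X[F], q, W' ∪ W'') → Z` holds as well. -/
theorem dseq_join {α : Type*} (F : CNF α) (X Z W' W'' : Set α) (q' q'' : Assign α) (v : α)
    (hX : X ⊆ cnfVars F) (hq' : avars q' ⊆ cnfVars F) (hq'' : avars q'' ⊆ cnfVars F)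
    (hZW' : Z ⊆ W') (hW'q : W' ⊆ X \ avars q')
    (hZW'' : Z ⊆ W'') (hW''q : W'' ⊆ X \ avars q'')
    (hd1 : avars q' ∩ W'' = ∅) (hd2 : avars q'' ∩ W' = ∅)
    (hv : v ∈ cnfVars F) (hres : AResolvableOn q' q'' v)
    (hds1 : DSeq F X q' W' Z) (hds2 : DSeq F X q'' W'' Z) :
    DSeq F X (aResolvent q' q'' v) (W' ∪ W'') Z := by
  intro Vs hVsZ hVsne p hbp
  intro hrm'
  set q : Assign α := aResolvent q' q'' v with hqdef
  obtain ⟨b, hq'v, hq''v⟩ : ∃ b, q' v = some b ∧ q'' v = some (!b) := (hres v).mpr rfl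
  have hagree : ∀ w, w ≠ v → ∀ c c', q' w = some c → q'' w = some c' → c' = c := by
    intro w hw c c' h1 h2
    by_contra hne'
    have hopp : aOppOn q' q'' w := ⟨c, h1, by
      cases c <;> cases c' <;> simp_all⟩
    exact hw ((hres w).mp hopp)
  have hqeq : ∀ w, q w = if w = v then none else ((q' w).orElse (fun _ => q'' w)) := by
    intro w; rfl
  have hqv : q v = none := by rw [hqeq]; simp
  have hq1 : ∀ w c, w ≠ v → q' w = some c → q w = some c := by
    intro w c hw h; rw [hqeq, if_neg hw, h]; rfl
  have hq2 : ∀ w, w ≠ v → q' w = none → q w = q'' w := by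
    intro w hw h; rw [hqeq, if_neg hw, h]; rfl
  have havq : ∀ w, q w ≠ none → q' w ≠ none ∨ q'' w ≠ none := by
    intro w h
    by_contra hc
    push_neg at hc
    obtain ⟨h1, h2⟩ := hc
    by_cases hw : w = v
    · subst hw; exact h hqv
    · exact h (by rw [hq2 w hw h1, h2])
  have hsub' : ∀ w c, q' w = some c → w = v ∨ q w = some c := by
    intro w c h
    by_cases hw : w = v
    · exact Or.inl hw
    · exact Or.inr (hq1 w c hw h)
  have hsub'' : ∀ w c, q'' w = some c → w = v ∨ q w = some c := by
    intro w c h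
    by_cases hw : w = v
    · exact Or.inl hw
    · refine Or.inr ?_
      cases h1 : q' w with
      | none => rw [hq2 w hw h1, h]
      | some c' =>
        have : c = c' := hagree w hw c' c h1 h
        rw [hq1 w c' hw h1, this]
  have hvav' : v ∈ avars q' := by simp [avars, hq'v]
  have hvav'' : v ∈ avars q'' := by simp [avars, hq''v]
  have hVsq' : ∀ w ∈ Vs, q' w = none := by
    intro w hw
    have : w ∈ X \ avars q' := hW'q (hZW' (hVsZ hw))
    have := this.2
    simp [avars] at this
    exact this
  have hVsq'' : ∀ w ∈ Vs, q'' w = none := by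
    intro w hw
    have : w ∈ X \ avars q'' := hW''q (hZW'' (hVsZ hw))
    have := this.2
    simp [avars] at this
    exact this
  have hVq : ∀ w ∈ Vs, q w = none := by
    intro w hw
    by_cases hwv : w = v
    · subst hwv; exact hqv
    · rw [hq2 w hwv (hVsq' w hw), hVsq'' w hw]
  have hvVs : v ∉ Vs := fun h => ((hW'q (hZW' (hVsZ h))).2) hvav'
  have hQF : avars q ⊆ cnfVars F := by
    intro w hw
    rcases havq w hw with h | h
    · exact hq' h
    · exact hq'' h
  -- the adjusted point p₁
  set p₁ : α → Bool := fun w => (q w).getD (p w) with hp₁def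
  have hextq : PExtends q p₁ := by intro w c h; simp [hp₁def, h]
  have hp1eq : ∀ w, q w = none → p₁ w = p w := by intro w h; simp [hp₁def, h]
  have hiff : ∀ E ∈ cofactor q F, (pointSatClause p₁ E ↔ pointSatClause p E) :=
    fun E hE => sat_agree (fun l hl => hp1eq l.1 (cof_novars hE hl))
  obtain ⟨hne, hf, hall, hmin⟩ := hbp
  have hbp₁ : BoundaryPt (cofactor q F) Vs p₁ := by
    refine ⟨hne, fun h => hf (fun E hE => (hiff E hE).mp (h E hE)), ?_, ?_⟩
    · intro E hE hEf
      exact hall E hE (fun h => hEf ((hiff E hE).mpr h))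
    · intro Z' hZ' h
      exact hmin Z' hZ' (fun E hE hEf => h E hE (fun hh => hEf ((hiff E hE).mp hh)))
  -- the adjusted removing clause
  obtain ⟨C₀, hC₀i, hC₀f, hC₀W⟩ := hrm'
  set C₀' : Clause α := C₀.filter (fun l => q l.1 = none) with hC₀'def
  have hC₀'q : ∀ l ∈ C₀', q l.1 = none := fun l hl => (Finset.mem_filter.mp hl).2
  have hC₀'i : Implies (cofactor q F) C₀' := by
    intro s hs
    set s₂ : α → Bool := fun w =>
      if q w = none then s w else (if (w, true) ∈ C₀ then false else true) with hs₂def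
    have hs₂ : pointSatCNF s₂ (cofactor q F) := by
      intro E hE
      refine (sat_agree (p := s₂) (p' := s) (fun l hl => ?_)).mpr (hs E hE)
      simp [hs₂def, cof_novars hE hl]
    obtain ⟨l, hl, hsat⟩ := hC₀i s₂ hs₂
    by_cases hql : q l.1 = none
    · refine ⟨l, Finset.mem_filter.mpr ⟨hl, hql⟩, ?_⟩
      rw [← hsat]; simp [hs₂def, hql]
    · exfalso
      obtain ⟨wl, bl⟩ := l
      simp only at hsat
      have hs₂val : s₂ wl = if (wl, true) ∈ C₀ then false else true := by
        simp [hs₂def, hql]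
      cases bl with
      | false =>
        rw [hs₂val] at hsat
        have hmemt : (wl, true) ∈ C₀ := by
          by_contra hc
          rw [if_neg hc] at hsat
          exact Bool.noConfusion hsat
        have h1 := not_sat_iff.mp hC₀f (wl, true) hmemt
        have h2 := not_sat_iff.mp hC₀f (wl, false) hl
        simp only at h1 h2
        cases hp : p wl
        · exact h2 hp
        · exact h1 hp
      | true =>
        rw [hs₂val, if_pos hl] at hsat
        exact Bool.noConfusion hsat
  have hC₀'f : ¬ pointSatClause p₁ C₀' := by
    rw [not_sat_iff]
    intro l hl
    rw [hp1eq l.1 (hC₀'q l hl)]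
    exact not_sat_iff.mp hC₀f l ((Finset.mem_filter.mp hl).1)
  have hC₀'sub : clauseVars C₀' ⊆ clauseVars C₀ := by
    rintro w ⟨bb, hb⟩
    exact ⟨bb, (Finset.mem_filter.mp hb).1⟩
  have hp₁v : p₁ v = p v := hp1eq v hqv
  by_cases hpv : p v = b
  · -- use the first D-sequent
    have hdiff' : ∀ w, q w ≠ none → q' w = none → w ∉ W' := by
      intro w hw h1 hw'
      rcases havq w hw with h | h
      · exact h h1
      · exact Set.eq_empty_iff_forall_notMem.mp hd2 w ⟨h, hw'⟩
    have hC₀'W : clauseVars C₀' ∩ W' = ∅ := by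
      rw [Set.eq_empty_iff_forall_notMem]
      rintro w ⟨h1, h2⟩
      exact Set.eq_empty_iff_forall_notMem.mp hC₀W w ⟨hC₀'sub h1, Or.inl h2⟩
    obtain ⟨hb₁, hr₁⟩ := main_transfer F q q' v b Vs W' p₁ hqv hq'v hsub' hVq hvVs hQF
      hdiff' (by rw [hp₁v, hpv]) hextq hbp₁ C₀' hC₀'i hC₀'f hC₀'W hC₀'q
    exact hds1 Vs hVsZ hVsne p₁ hb₁ hr₁
  · -- use the second D-sequent
    have hpv2 : p v = !b := by cases hb : p v <;> cases b <;> simp_all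
    have hdiff'' : ∀ w, q w ≠ none → q'' w = none → w ∉ W'' := by
      intro w hw h1 hw'
      rcases havq w hw with h | h
      · exact Set.eq_empty_iff_forall_notMem.mp hd1 w ⟨h, hw'⟩
      · exact h h1
    have hC₀'W : clauseVars C₀' ∩ W'' = ∅ := by
      rw [Set.eq_empty_iff_forall_notMem]
      rintro w ⟨h1, h2⟩
      exact Set.eq_empty_iff_forall_notMem.mp hC₀W w ⟨hC₀'sub h1, Or.inr h2⟩
    obtain ⟨hb₁, hr₁⟩ := main_transfer F q q'' v (!b) Vs W'' p₁ hqv hq''v hsub'' hVq hvVs hQF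
      hdiff'' (by rw [hp₁v, hpv2]) hextq hbp₁ C₀' hC₀'i hC₀'f hC₀'W hC₀'q
    exact hds2 Vs hVsZ hVsne p₁ hb₁ hr₁

end QE
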